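/- Let τ, V, F, b_1,...,b_d be as in the coordinate expansion setup, and let (w_n)_{n∈ℤ} be a sequence in F_p((t))^d with w_n → 0 as n → ∞. Then for each z = Σ_{(j,k)} n_{j,k} τ^j(b_k) ∈ F_p((t))^d, the sum φ(z) := Σ_{(j,k)} n_{j,k} w_{k + jd} converges in F_p((t))^d, and the map φ so defined is a continuous group endomorphism of F_p((t))^d. -/

import Mathlib

/-- Coordinatewise multiplication by `t^j` (`j ∈ ℤ`) on `F_p((t))^d`, i.e. `τ^j`. -/
noncomputable def tauZ (p d : ℕ) (j : ℤ) (z : Fin d → LaurentSeries (ZMod p)) :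
    Fin d → LaurentSeries (ZMod p) :=
  fun r => HahnSeries.single j (1 : ZMod p) * z r

namespace SumExpAux

variable (p d : ℕ) [Fact p.Prime]

local notation "L" => LaurentSeries (ZMod p)
local notation "X" => (Fin d → LaurentSeries (ZMod p))

theorem tauZ_add (j : ℤ) (x y : X) : tauZ p d j (x + y) = tauZ p d j x + tauZ p d j y := by
  funext r; simp [tauZ, mul_add]

/-- `tauZ` as an additive monoid hom. -/
noncomputable def tauHom (j : ℤ) : X →+ X := AddMonoidHom.mk' (tauZ p d j) (tauZ_add p d j)

theorem tauZ_cont (j : ℤ) : Continuous (tauZ p d j) := by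
  refine continuous_pi fun r => ?_
  exact continuous_const.mul (continuous_apply r)

theorem tauZ_comp (j j' : ℤ) (z : X) : tauZ p d j (tauZ p d j' z) = tauZ p d (j + j') z := by
  funext r
  simp only [tauZ, ← mul_assoc, HahnSeries.single_mul_single, one_mul]

theorem tauZ_zero (z : X) : tauZ p d 0 z = z := by
  funext r; simp [tauZ, HahnSeries.single_zero_one]

theorem smul_eq_nsmul_L (c : ZMod p) (x : L) : c • x = c.val • x := by
  rw [← Nat.cast_smul_eq_nsmul (ZMod p), ZMod.natCast_val, ZMod.cast_id]

theorem tauZ_smul (j : ℤ) (c : ZMod p) (z : X) : tauZ p d j (c • z) = c • tauZ p d j z := by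
  funext r
  simp only [tauZ, Pi.smul_apply, smul_eq_nsmul_L]
  exact mul_smul_comm c.val (HahnSeries.single j (1 : ZMod p)) (z r)

theorem smul_eq_nsmul (c : ZMod p) (x : X) : c • x = c.val • x := by
  rw [← Nat.cast_smul_eq_nsmul (ZMod p), ZMod.natCast_val, ZMod.cast_id]

/-- The "ball" subgroup of radius `γ` in `F_p((t))^d`. -/
def ball (γ : (WithZero (Multiplicative ℤ))ˣ) : AddSubgroup X where
  carrier := {x | ∀ r, Valued.v (x r) < (γ : WithZero (Multiplicative ℤ))}
  zero_mem' := fun r => by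
    simpa using (zero_lt_iff.2 γ.ne_zero : (0 : WithZero (Multiplicative ℤ)) < γ)
  add_mem' := fun {x y} hx hy r =>
    lt_of_le_of_lt (Valuation.map_add _ _ _) (max_lt (hx r) (hy r))
  neg_mem' := fun {x} hx r => by
    rw [Pi.neg_apply, Valuation.map_neg]; exact hx r

theorem ball_mem_nhds (γ : (WithZero (Multiplicative ℤ))ˣ) : (ball p d γ : Set X) ∈ nhds 0 := by
  have : (ball p d γ : Set X) = Set.pi Set.univ
      (fun _ : Fin d => {y : L | Valued.v y < (γ : WithZero (Multiplicative ℤ))}) := by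
    ext x; simp [ball, Set.mem_pi]
  rw [this]
  exact set_pi_mem_nhds Set.finite_univ fun i _ =>
    Valued.mem_nhds_zero.2 ⟨Units.mk0 (Valued.v.restrict (HahnSeries.single
      (-WithZero.log (γ : WithZero (Multiplicative ℤ))) (1 : ZMod p) : L))
      ((Valuation.ne_zero_iff _).2 (HahnSeries.single_ne_zero one_ne_zero)), fun y hy => by
        have h := (Valuation.restrict_lt_iff _).1 hy
        rwa [LaurentSeries.valuation_single_zpow, neg_neg, WithZero.exp_log γ.ne_zero] at h⟩


theorem ball_isOpen (γ : (WithZero (Multiplicative ℤ))ˣ) : IsOpen (ball p d γ : Set X) :=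
  AddSubgroup.isOpen_of_mem_nhds _ (ball_mem_nhds p d γ)

theorem ball_isClosed (γ : (WithZero (Multiplicative ℤ))ˣ) : IsClosed (ball p d γ : Set X) :=
  AddSubgroup.isClosed_of_isOpen _ (ball_isOpen p d γ)

theorem tauZ_ball {γ : (WithZero (Multiplicative ℤ))ˣ} {x : X} (hx : x ∈ ball p d γ) :
    tauZ p d 1 x ∈ ball p d γ := by
  intro r
  have h1 : Valued.v (HahnSeries.single (1:ℤ) (1 : ZMod p) * x r)
      = Valued.v (HahnSeries.single (1:ℤ) (1 : ZMod p) : L) * Valued.v (x r) := map_mul _ _ _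
  have h2 : Valued.v (HahnSeries.single (1:ℤ) (1 : ZMod p) : L)
      ≤ (1 : WithZero (Multiplicative ℤ)) := by
    rw [LaurentSeries.valuation_single_zpow (K := ZMod p) 1]
    exact (WithZero.exp_le_exp.2 (by decide : (-1:ℤ) ≤ 0)).trans_eq WithZero.exp_zero
  calc Valued.v ((tauZ p d 1 x) r) = _ * Valued.v (x r) := h1
    _ ≤ Valued.v (x r) := mul_le_of_le_one_left' h2
    _ < γ := hx r

/-- Every neighborhood of `0` contains a ball. -/
theorem exists_ball_subset (hd : 0 < d) {U : Set X} (hU : U ∈ nhds 0) :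
    ∃ γ : (WithZero (Multiplicative ℤ))ˣ, (ball p d γ : Set X) ⊆ U := by
  rw [nhds_pi, Filter.mem_pi] at hU
  obtain ⟨I, hIfin, t, ht, htU⟩ := hU
  choose γf hγf using fun r : Fin d => Valued.mem_nhds_zero.1 (ht r)
  obtain ⟨r0, -, hr0⟩ := Finset.exists_min_image Finset.univ
    (fun r => ((((γf r).map (MonoidWithZeroHom.ValueGroup₀.embedding (f := MonoidWithZeroHom.ofClass (Valued.v : Valuation L (WithZero (Multiplicative ℤ)))))) : (WithZero (Multiplicative ℤ))ˣ) : WithZero (Multiplicative ℤ))) ⟨⟨0, hd⟩, Finset.mem_univ _⟩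
  refine ⟨(γf r0).map (MonoidWithZeroHom.ValueGroup₀.embedding (f := MonoidWithZeroHom.ofClass (Valued.v : Valuation L (WithZero (Multiplicative ℤ))))), fun x hx => htU fun r _ => hγf r ?_⟩
  exact (Valuation.restrict_lt_iff_lt_embedding _).2 (lt_of_lt_of_le (hx r) (hr0 r (Finset.mem_univ r)))

theorem zmod_smul_mem {H : AddSubgroup X} {x : X} (hx : x ∈ H) (c : ZMod p) : c • x ∈ H := by
  rw [smul_eq_nsmul]
  exact AddSubgroup.nsmul_mem H hx c.val

/-- If all terms of a `HasSum` lie in a closed additive subgroup, so does the sum. -/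
theorem hasSum_mem_of_closed {ι : Type*} {f : ι → X} {x : X} {H : AddSubgroup X}
    (hH : IsClosed (H : Set X)) (hf : ∀ i, f i ∈ H) (hsum : HasSum f x) : x ∈ H :=
  hH.mem_of_tendsto hsum (Filter.Eventually.of_forall fun s =>
    AddSubgroup.sum_mem H fun i _ => hf i)


theorem tauZ_natCast_mem (V : AddSubgroup X) (hτV : ∀ v ∈ V, tauZ p d 1 v ∈ V) :
    ∀ (n : ℕ), ∀ v ∈ V, tauZ p d (n : ℤ) v ∈ V := by
  intro n
  induction n with
  | zero => intro v hv; rw [Int.natCast_zero, tauZ_zero]; exact hv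
  | succ n ih =>
    intro v hv
    have : ((n + 1 : ℕ) : ℤ) = 1 + (n : ℤ) := by push_cast; ring
    rw [this, ← tauZ_comp]
    exact hτV _ (ih v hv)

theorem exists_shift_lt (γ : (WithZero (Multiplicative ℤ))ˣ) (x : WithZero (Multiplicative ℤ)) :
    ∃ m : ℕ, ∀ n : ℕ, m ≤ n →
      ((Multiplicative.ofAdd (-(n:ℤ)) : Multiplicative ℤ) : WithZero (Multiplicative ℤ)) * x
        < (γ : WithZero (Multiplicative ℤ)) := by
  rcases eq_or_ne x 0 with rfl | hx
  · exact ⟨0, fun n _ => by rw [mul_zero]; exact zero_lt_iff.2 γ.ne_zero⟩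
  · obtain ⟨a, rfl⟩ := WithZero.ne_zero_iff_exists.1 hx
    obtain ⟨g, hg⟩ := WithZero.ne_zero_iff_exists.1 γ.ne_zero
    refine ⟨(Multiplicative.toAdd a - Multiplicative.toAdd g).toNat + 1, fun n hn => ?_⟩
    rw [← hg, ← WithZero.coe_mul, WithZero.coe_lt_coe]
    have : Multiplicative.ofAdd (-(n:ℤ)) * a
        = Multiplicative.ofAdd (-(n:ℤ) + Multiplicative.toAdd a) := by
      rw [ofAdd_add, ofAdd_toAdd]
    rw [this, ← ofAdd_toAdd g, Multiplicative.ofAdd_lt]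
    omega

theorem exists_tauZ_mem_ball (γ : (WithZero (Multiplicative ℤ))ˣ) (v : X) :
    ∃ m : ℕ, tauZ p d (m : ℤ) v ∈ ball p d γ := by
  choose mf hmf using fun r : Fin d => exists_shift_lt γ (Valued.v (v r))
  rcases (Finset.univ : Finset (Fin d)).eq_empty_or_nonempty with he | hne
  · exact ⟨0, fun r => absurd (Finset.mem_univ r) (by simp [he])⟩
  · obtain ⟨m, hm⟩ := Finset.exists_max_image (Finset.univ : Finset (Fin d)) mf hne
    refine ⟨mf m, fun r => ?_⟩
    have h1 : Valued.v ((tauZ p d (mf m : ℤ) v) r)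
        = Valued.v (HahnSeries.single ((mf m : ℕ) : ℤ) (1 : ZMod p) : L) * Valued.v (v r) :=
      map_mul _ _ _
    rw [h1, LaurentSeries.valuation_single_zpow (K := ZMod p)]
    exact hmf r (mf m) (hm.2 r (Finset.mem_univ r))

theorem contraction (V : AddSubgroup X) (hVc : IsCompact (V : Set X))
    (hτV : ∀ v ∈ V, tauZ p d 1 v ∈ V) (γ : (WithZero (Multiplicative ℤ))ˣ) :
    ∃ m : ℕ, ∀ n : ℕ, m ≤ n → ∀ v ∈ V, tauZ p d (n : ℤ) v ∈ ball p d γ := by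
  set A : ℕ → Set X := fun m => tauZ p d (m : ℤ) ⁻¹' (ball p d γ) with hA
  have hAopen : ∀ m, IsOpen (A m) := fun m => (ball_isOpen p d γ).preimage (tauZ_cont p d _)
  have hAmono : ∀ m n : ℕ, m ≤ n → A m ⊆ A n := by
    intro m n hmn
    induction n with
    | zero => simpa [Nat.le_zero.1 hmn] using subset_rfl
    | succ n ih =>
      rcases Nat.lt_or_ge m (n+1) with h | h
      · refine subset_trans (ih (Nat.lt_succ_iff.1 h)) fun x hx => ?_
        have : ((n + 1 : ℕ) : ℤ) = 1 + (n : ℤ) := by push_cast; ring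
        simp only [A, Set.mem_preimage, this, ← tauZ_comp]
        exact tauZ_ball p d hx
      · simpa [Nat.le_antisymm hmn h] using subset_rfl
  have hcover : (V : Set X) ⊆ ⋃ m : ℕ, A m := fun v hv => by
    obtain ⟨m, hm⟩ := exists_tauZ_mem_ball p d γ v
    exact Set.mem_iUnion.2 ⟨m, hm⟩
  obtain ⟨s, hs⟩ := hVc.elim_finite_subcover A hAopen hcover
  refine ⟨s.sup id, fun n hn v hv => ?_⟩
  obtain ⟨m, hms, hmv⟩ := Set.mem_iUnion₂.1 (hs hv)
  exact hAmono m n (le_trans (Finset.le_sup (f := id) hms) hn) hmv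


theorem exists_expansion (hd : 0 < d) (V : AddSubgroup X) (hVc : IsCompact (V : Set X))
    (hτV : ∀ v ∈ V, tauZ p d 1 v ∈ V) (b : Fin d → X) (hbV : ∀ k, b k ∈ V)
    (hgen : ∀ v ∈ V, ∃ c : Fin d → ZMod p, ∃ w ∈ V,
      v = (∑ k, c k • b k) + tauZ p d 1 w)
    {z : X} (hz : z ∈ V) :
    ∃ C : ℤ × Fin d → ZMod p, (∀ jk : ℤ × Fin d, jk.1 < 0 → C jk = 0) ∧
      HasSum (fun jk : ℤ × Fin d => C jk • tauZ p d jk.1 (b jk.2)) z := by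
  classical
  have step : ∀ v : {x : X // x ∈ V}, ∃ c : Fin d → ZMod p, ∃ w : {x : X // x ∈ V},
      (v : X) = (∑ k, c k • b k) + tauZ p d 1 (w : X) := by
    rintro ⟨v, hv⟩
    obtain ⟨c, w, hw, he⟩ := hgen v hv
    exact ⟨c, ⟨w, hw⟩, he⟩
  choose cf wf hcf using step
  set zs : ℕ → {x : X // x ∈ V} := fun n => Nat.rec ⟨z, hz⟩ (fun _ v => wf v) n with hzs
  set C : ℤ × Fin d → ZMod p :=
    fun jk => if 0 ≤ jk.1 then cf (zs jk.1.toNat) jk.2 else 0 with hC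
  have hCneg : ∀ jk : ℤ × Fin d, jk.1 < 0 → C jk = 0 := fun jk h => by
    simp [hC, not_le.2 h]
  have hP : ∀ n : ℕ, z = (∑ j ∈ Finset.range n,
      tauZ p d (j : ℤ) (∑ k, cf (zs j) k • b k)) + tauZ p d (n : ℤ) (zs n) := by
    intro n
    induction n with
    | zero =>
      simp only [Finset.range_zero, Finset.sum_empty, Nat.cast_zero, tauZ_zero, zero_add]
      rfl
    | succ n ih =>
      rw [ih, Finset.sum_range_succ]
      have h1 : tauZ p d (n : ℤ) ((zs n : X))
          = tauZ p d (n : ℤ) (∑ k, cf (zs n) k • b k)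
            + tauZ p d ((n + 1 : ℕ) : ℤ) ((zs (n+1) : X)) := by
        have : (zs (n+1) : X) = wf (zs n) := rfl
        rw [this]
        conv_lhs => rw [hcf (zs n)]
        rw [tauZ_add, tauZ_comp]
        norm_num [add_comm]
      rw [h1]
      abel
  refine ⟨C, hCneg, ?_⟩
  rw [HasSum, ← tendsto_sub_nhds_zero_iff]
  refine Filter.tendsto_def.2 fun U hU => ?_
  obtain ⟨γ, hγ⟩ := exists_ball_subset p d hd (U := U) hU
  obtain ⟨m, hm⟩ := contraction p d V hVc hτV γ
  set e : Function.Embedding ℕ ℤ := ⟨Nat.cast, Nat.cast_injective⟩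
  set s0 : Finset (ℤ × Fin d) := ((Finset.range m).map e) ×ˢ Finset.univ with hs0
  rw [SummationFilter.unconditional_filter, Filter.mem_atTop_sets]
  refine ⟨s0, fun s hs => ?_⟩
  have hsub : s0 ⊆ s := Finset.le_iff_subset.mp hs
  set f : ℤ × Fin d → X := fun jk => C jk • tauZ p d jk.1 (b jk.2) with hf
  have hsum0 : ∑ jk ∈ s0, f jk = z - tauZ p d (m : ℤ) (zs m) := by
    rw [hs0, Finset.sum_product, Finset.sum_map]
    have : ∀ j ∈ Finset.range m, (∑ k, f ((e j : ℤ), k))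
        = tauZ p d (j : ℤ) (∑ k, cf (zs j) k • b k) := by
      intro j _
      have hmap : tauZ p d (j : ℤ) (∑ k, cf (zs j) k • b k)
          = ∑ k, tauZ p d (j : ℤ) (cf (zs j) k • b k) :=
        map_sum (tauHom p d (j : ℤ)) _ _
      rw [hmap]
      refine Finset.sum_congr rfl fun k _ => ?_
      show C ((j : ℤ), k) • tauZ p d (j : ℤ) (b k) = _
      have hCv : C ((j : ℤ), k) = cf (zs j) k := by simp [hC, Int.toNat_natCast]
      rw [tauZ_smul, hCv]
    rw [Finset.sum_congr rfl this]
    rw [eq_sub_iff_add_eq, ← hP m]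
  have hmem : ∀ jk ∈ s \ s0, f jk ∈ ball p d γ := by
    intro jk hjk
    rw [Finset.mem_sdiff] at hjk
    have hnot : jk.1 < 0 ∨ (m : ℤ) ≤ jk.1 := by
      rcases lt_or_ge jk.1 0 with h | h
      · exact Or.inl h
      · refine Or.inr ?_
        by_contra hlt
        push_neg at hlt
        refine hjk.2 ?_
        rw [hs0, Finset.mem_product]
        refine ⟨Finset.mem_map.2 ⟨jk.1.toNat, Finset.mem_range.2 ?_, ?_⟩, Finset.mem_univ _⟩
        · omega
        · show ((jk.1.toNat : ℕ) : ℤ) = jk.1; omega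
    rcases hnot with h | h
    · rw [hf]; simp only [hCneg jk h, zero_smul]; exact (ball p d γ).zero_mem
    · have h1 : jk.1 = ((jk.1.toNat : ℕ) : ℤ) := by omega
      refine zmod_smul_mem p d ?_ _
      rw [h1]
      exact hm jk.1.toNat (by omega) _ (hbV jk.2)
  have hsdiff : ∑ jk ∈ s \ s0, f jk ∈ ball p d γ :=
    AddSubgroup.sum_mem _ hmem
  have : (∑ jk ∈ s, f jk) - z = (∑ jk ∈ s \ s0, f jk) - tauZ p d (m : ℤ) (zs m) := by
    rw [← Finset.sum_sdiff hsub, hsum0]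
    abel
  rw [Set.mem_preimage, this]
  exact hγ (AddSubgroup.sub_mem _ hsdiff (hm m le_rfl _ (zs m).2))


theorem expansion_unique (V : AddSubgroup X) (hVc : IsCompact (V : Set X))
    (hτV : ∀ v ∈ V, tauZ p d 1 v ∈ V) (b : Fin d → X) (hbV : ∀ k, b k ∈ V)
    (hdir : ∀ (c : Fin d → ZMod p) (w : X), w ∈ V →
      (∑ k, c k • b k) = tauZ p d 1 w → c = 0)
    (c : ℤ × Fin d → ZMod p) (hvan : ∃ j0 : ℤ, ∀ jk : ℤ × Fin d, jk.1 < j0 → c jk = 0)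
    (hsum : HasSum (fun jk : ℤ × Fin d => c jk • tauZ p d jk.1 (b jk.2)) 0) : c = 0 := by
  classical
  by_contra hc
  obtain ⟨jk0, hjk0⟩ := Function.ne_iff.1 hc
  obtain ⟨j0, hj0⟩ := hvan
  have hbdd : ∃ bd : ℤ, ∀ j : ℤ, (∃ k, c (j, k) ≠ 0) → bd ≤ j := by
    refine ⟨j0, fun j ⟨k, hk⟩ => ?_⟩
    by_contra h
    exact hk (hj0 (j, k) (by push_neg at h; exact h))
  obtain ⟨j₁, ⟨k₁, hk₁⟩, hleast⟩ :=
    Int.exists_least_of_bdd hbdd ⟨jk0.1, jk0.2, by simpa using hjk0⟩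
  set T : AddSubgroup X := V.map (tauHom p d 1) with hT
  have hTclosed : IsClosed (T : Set X) := by
    have : (T : Set X) = tauZ p d 1 '' (V : Set X) := by
      rw [hT]; rfl
    rw [this]
    exact (hVc.image (tauZ_cont p d 1)).isClosed
  have hsum2 : HasSum (fun jk : ℤ × Fin d =>
      c jk • tauZ p d (jk.1 - j₁) (b jk.2)) 0 := by
    have h0 : tauZ p d (-j₁) 0 = 0 := map_zero (tauHom p d (-j₁))
    have := hsum.map (tauHom p d (-j₁)) (tauZ_cont p d (-j₁))
    rw [show (tauHom p d (-j₁)) 0 = 0 from h0] at this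
    refine this.congr_fun fun jk => ?_
    have h2 : tauZ p d (-j₁) (c jk • tauZ p d jk.1 (b jk.2))
        = c jk • tauZ p d (jk.1 - j₁) (b jk.2) := by
      rw [tauZ_smul, tauZ_comp, neg_add_eq_sub]
    exact h2.symm
  set f' : ℤ × Fin d → X := fun jk => c jk • tauZ p d (jk.1 - j₁) (b jk.2) with hf'
  set A : X := ∑ k, c (j₁, k) • b k with hA
  set g : ℤ × Fin d → X := fun jk => if jk.1 = j₁ then f' jk else 0 with hg
  have hgsum : HasSum g A := by
    have hne : ∀ jk : ℤ × Fin d, jk ∉ ({j₁} : Finset ℤ) ×ˢ (Finset.univ : Finset (Fin d)) →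
        g jk = 0 := by
      intro jk hjk
      have : jk.1 ≠ j₁ := by
        intro h
        exact hjk (Finset.mem_product.2 ⟨by simp [h], Finset.mem_univ _⟩)
      simp [hg, this]
    have : HasSum g (∑ jk ∈ ({j₁} : Finset ℤ) ×ˢ (Finset.univ : Finset (Fin d)), g jk) :=
      hasSum_sum_of_ne_finset_zero hne
    convert this using 1
    rw [Finset.sum_product, Finset.sum_singleton]
    refine Finset.sum_congr rfl fun k _ => ?_
    simp [hg, hf', tauZ_zero, sub_self]
  have hterm : ∀ jk : ℤ × Fin d, f' jk - g jk ∈ T := by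
    intro jk
    rcases eq_or_ne jk.1 j₁ with h | h
    · rw [hg]
      simp only [if_pos h, sub_self]
      exact T.zero_mem
    · rw [hg]
      simp only [if_neg h, sub_zero]
      rcases lt_or_gt_of_ne h with hlt | hgt
      · have : c jk = 0 := by
          by_contra hne
          exact absurd (hleast jk.1 ⟨jk.2, hne⟩) (not_le.2 hlt)
        have hz : f' jk = 0 := by simp [hf', this]
        rw [hz]
        exact T.zero_mem
      · have h1 : jk.1 - j₁ = ((((jk.1 - j₁).toNat - 1 : ℕ) : ℤ) + 1) := by omega
        have h2 : tauZ p d (jk.1 - j₁) (b jk.2) ∈ T := by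
          rw [h1, add_comm, ← tauZ_comp]
          exact AddSubgroup.mem_map.2
            ⟨_, tauZ_natCast_mem p d V hτV _ _ (hbV jk.2), rfl⟩
        exact zmod_smul_mem p d h2 _
  have hnegA : -A ∈ T := by
    have := hsum2.sub hgsum
    rw [zero_sub] at this
    exact hasSum_mem_of_closed p d hTclosed hterm this
  obtain ⟨w', hw', hweq⟩ := AddSubgroup.mem_map.1 (T.neg_mem hnegA)
  rw [neg_neg] at hweq
  have := hdir (fun k => c (j₁, k)) w' hw' (by rw [← hA, ← hweq]; rfl)
  exact hk₁ (congrFun this k₁)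

theorem add_smul_X (a c : ZMod p) (x : X) : (a + c) • x = a • x + c • x := by
  funext r
  simp only [Pi.smul_apply, Pi.add_apply]
  exact add_smul a c (x r)

theorem sub_smul_X (a c : ZMod p) (x : X) : (a - c) • x = a • x - c • x := by
  funext r
  simp only [Pi.smul_apply, Pi.sub_apply]
  exact sub_smul a c (x r)

theorem zero_smul_X (x : X) : (0 : ZMod p) • x = 0 := by
  funext r
  simp only [Pi.smul_apply]
  exact zero_smul (ZMod p) (x r)

end SumExpAux

open SumExpAux in
/-- With `V`, `b` as in the coordinate-expansion setup (unique expansions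
`z = Σ_{j,k} n_{j,k}(z) τ^j(b_k)`), and `(w_n)_{n∈ℤ}` a sequence in `F_p((t))^d` with
`w_n → 0` as `n → ∞`: for each `z` the sum `φ(z) := Σ_{j,k} n_{j,k}(z) w_{k+jd}`
converges, and `φ` is a continuous additive endomorphism of `F_p((t))^d`. -/
theorem sum_along_expansion_endomorphism (p : ℕ) [Fact p.Prime] (d : ℕ) (hd : 0 < d)
    (V : AddSubgroup (Fin d → LaurentSeries (ZMod p)))
    (hVc : IsCompact (V : Set (Fin d → LaurentSeries (ZMod p))))
    (hVo : IsOpen (V : Set (Fin d → LaurentSeries (ZMod p))))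
    (hτV : ∀ v ∈ V, tauZ p d 1 v ∈ V)
    (b : Fin d → (Fin d → LaurentSeries (ZMod p)))
    (hbV : ∀ k, b k ∈ V)
    (hgen : ∀ v ∈ V, ∃ c : Fin d → ZMod p, ∃ w ∈ V,
      v = (∑ k, c k • b k) + tauZ p d 1 w)
    (hdir : ∀ (c : Fin d → ZMod p) (w : Fin d → LaurentSeries (ZMod p)), w ∈ V →
      (∑ k, c k • b k) = tauZ p d 1 w → c = 0)
    (N : (Fin d → LaurentSeries (ZMod p)) → (ℤ × Fin d → ZMod p))
    (hNvanish : ∀ z, ∃ j0 : ℤ, ∀ jk : ℤ × Fin d, jk.1 < j0 → N z jk = 0)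
    (hNsum : ∀ z, HasSum (fun jk : ℤ × Fin d => N z jk • tauZ p d jk.1 (b jk.2)) z)
    (w : ℤ → (Fin d → LaurentSeries (ZMod p)))
    (hw : Filter.Tendsto w Filter.atTop (nhds 0)) :
    ∃ φ : (Fin d → LaurentSeries (ZMod p)) → (Fin d → LaurentSeries (ZMod p)),
      Continuous φ ∧
      (∀ z z', φ (z + z') = φ z + φ z') ∧
      ∀ z, HasSum (fun jk : ℤ × Fin d =>
        N z jk • w (((jk.2 : ℕ) : ℤ) + 1 + jk.1 * (d : ℤ))) (φ z) := by
  classical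
  have huniq : ∀ c : ℤ × Fin d → ZMod p, (∃ j0 : ℤ, ∀ jk : ℤ × Fin d, jk.1 < j0 → c jk = 0) →
      HasSum (fun jk : ℤ × Fin d => c jk • tauZ p d jk.1 (b jk.2)) 0 → c = 0 :=
    fun c h1 h2 => expansion_unique p d V hVc hτV b hbV hdir c h1 h2
  -- additivity of coefficients
  have hNadd : ∀ z z' (jk : ℤ × Fin d), N (z + z') jk = N z jk + N z' jk := by
    intro z z' jk
    have h3 := (hNsum (z + z')).sub ((hNsum z).add (hNsum z'))
    rw [sub_self] at h3
    have h4 : HasSum (fun jk : ℤ × Fin d =>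
        (N (z + z') jk - (N z jk + N z' jk)) • tauZ p d jk.1 (b jk.2)) 0 := by
      refine h3.congr_fun fun jk => ?_
      rw [sub_smul_X p d, add_smul_X p d]
    obtain ⟨j1, hj1⟩ := hNvanish (z + z')
    obtain ⟨j2, hj2⟩ := hNvanish z
    obtain ⟨j3, hj3⟩ := hNvanish z'
    have h5 := huniq _ ⟨min j1 (min j2 j3), fun jk hjk => by
      show N (z + z') jk - (N z jk + N z' jk) = 0
      rw [hj1 jk (by omega), hj2 jk (by omega), hj3 jk (by omega)]; simp⟩ h4
    have := congrFun h5 jk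
    simpa [sub_eq_zero] using this
  -- expansion coefficients of elements of τ^m(V) vanish below m
  have hNshift : ∀ (m : ℕ) (z : Fin d → LaurentSeries (ZMod p)), z ∈ V → ∀ jk : ℤ × Fin d, jk.1 < (m : ℤ) →
      N (tauZ p d (m : ℤ) z) jk = 0 := by
    intro m z hz
    obtain ⟨C, hCneg, hCsum⟩ := exists_expansion p d hd V hVc hτV b hbV hgen hz
    have h1 : HasSum (fun jk : ℤ × Fin d => C jk • tauZ p d (jk.1 + (m : ℤ)) (b jk.2))
        (tauZ p d (m : ℤ) z) := by
      have := hCsum.map (tauHom p d (m : ℤ)) (tauZ_cont p d _)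
      refine this.congr_fun fun jk => ?_
      have h2 : tauZ p d (m : ℤ) (C jk • tauZ p d jk.1 (b jk.2))
          = C jk • tauZ p d (jk.1 + (m : ℤ)) (b jk.2) := by
        rw [tauZ_smul, tauZ_comp, add_comm]
      exact h2.symm
    set e : ℤ × Fin d ≃ ℤ × Fin d := (Equiv.subRight (m : ℤ)).prodCongr (Equiv.refl (Fin d))
      with he
    set C' : ℤ × Fin d → ZMod p := fun jk => C (jk.1 - (m : ℤ), jk.2) with hC'
    have h2 : HasSum (fun jk : ℤ × Fin d => C' jk • tauZ p d jk.1 (b jk.2))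
        (tauZ p d (m : ℤ) z) := by
      have h2' := (Equiv.hasSum_iff e).2 h1
      refine h2'.congr_fun fun jk => ?_
      show C' jk • tauZ p d jk.1 (b jk.2)
          = C (e jk) • tauZ p d ((e jk).1 + (m : ℤ)) (b (e jk).2)
      have he1 : (e jk).1 = jk.1 - (m : ℤ) := rfl
      have he2 : (e jk).2 = jk.2 := rfl
      rw [he1, he2, sub_add_cancel]
      rfl
    have h3 := (hNsum (tauZ p d (m : ℤ) z)).sub h2
    rw [sub_self] at h3
    have h4 : HasSum (fun jk : ℤ × Fin d =>
        (N (tauZ p d (m : ℤ) z) jk - C' jk) • tauZ p d jk.1 (b jk.2)) 0 := by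
      refine h3.congr_fun fun jk => ?_
      rw [sub_smul_X p d]
    obtain ⟨j0, hj0⟩ := hNvanish (tauZ p d (m : ℤ) z)
    have h5 := huniq _ ⟨min j0 (m : ℤ), fun jk hjk => by
      show N (tauZ p d (m : ℤ) z) jk - C' jk = 0
      have h7 : C' jk = 0 := hCneg (jk.1 - (m : ℤ), jk.2) (by simp only; omega)
      rw [hj0 jk (by omega), h7, sub_zero]⟩ h4
    intro jk hjk
    have h6 := congrFun h5 jk
    have h7 : C' jk = 0 := hCneg (jk.1 - (m : ℤ), jk.2) (by simp only; omega)
    rw [Pi.zero_apply, sub_eq_zero, h7] at h6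
    exact h6
  -- summability of the image series
  have hφsummable : ∀ z : Fin d → LaurentSeries (ZMod p), Summable (fun jk : ℤ × Fin d =>
      N z jk • w (((jk.2 : ℕ) : ℤ) + 1 + jk.1 * (d : ℤ))) := by
    intro z
    rw [summable_iff_cauchySeq_finset]
    refine cauchySeq_finset_iff_sum_vanishing.2 fun e he => ?_
    obtain ⟨γ, hγ⟩ := exists_ball_subset p d hd he
    obtain ⟨M, hM⟩ := Filter.mem_atTop_sets.1 (hw (ball_mem_nhds p d γ))
    obtain ⟨j0, hj0⟩ := hNvanish z
    refine ⟨Finset.Ico j0 (max M 1) ×ˢ Finset.univ, fun t hdisj => ?_⟩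
    refine hγ (AddSubgroup.sum_mem _ fun jk hjk => ?_)
    have hnmem : jk ∉ Finset.Ico j0 (max M 1) ×ˢ (Finset.univ : Finset (Fin d)) :=
      fun hmem => (Finset.disjoint_left.1 hdisj) hjk hmem
    rw [Finset.mem_product, Finset.mem_Ico] at hnmem
    simp only [Finset.mem_univ, and_true, not_and, not_lt] at hnmem
    rcases lt_or_ge jk.1 j0 with h | h
    · rw [hj0 jk h, zero_smul_X p d]
      exact (ball p d γ).zero_mem
    · have hMle : max M 1 ≤ jk.1 := hnmem h
      have hidx : M ≤ ((jk.2 : ℕ) : ℤ) + 1 + jk.1 * (d : ℤ) := by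
        have h1 : jk.1 ≤ jk.1 * (d : ℤ) :=
          le_mul_of_one_le_right (by omega) (by exact_mod_cast hd)
        have h2 : (0 : ℤ) ≤ ((jk.2 : ℕ) : ℤ) := Int.natCast_nonneg _
        omega
      exact zmod_smul_mem p d (hM _ hidx) _
  set φ : (Fin d → LaurentSeries (ZMod p)) → (Fin d → LaurentSeries (ZMod p)) := fun z => ∑' jk : ℤ × Fin d,
    N z jk • w (((jk.2 : ℕ) : ℤ) + 1 + jk.1 * (d : ℤ)) with hφ
  have hφsum : ∀ z : Fin d → LaurentSeries (ZMod p), HasSum (fun jk : ℤ × Fin d =>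
      N z jk • w (((jk.2 : ℕ) : ℤ) + 1 + jk.1 * (d : ℤ))) (φ z) :=
    fun z => (hφsummable z).hasSum
  have hadd : ∀ z z' : Fin d → LaurentSeries (ZMod p), φ (z + z') = φ z + φ z' := by
    intro z z'
    have h2 : HasSum (fun jk : ℤ × Fin d =>
        N (z + z') jk • w (((jk.2 : ℕ) : ℤ) + 1 + jk.1 * (d : ℤ))) (φ z + φ z') := by
      refine ((hφsum z).add (hφsum z')).congr_fun fun jk => ?_
      rw [hNadd z z' jk]
      rw [add_smul_X p d]
    exact (hφsum (z + z')).unique h2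
  refine ⟨φ, ?_, hadd, hφsum⟩
  -- continuity
  have hφ0 : φ 0 = 0 := by
    have h := hadd 0 0
    rw [add_zero] at h
    exact (left_eq_add.1 h)
  set φhom : (Fin d → LaurentSeries (ZMod p)) →+ (Fin d → LaurentSeries (ZMod p)) := AddMonoidHom.mk' φ hadd with hφhom
  have hcont0 : ContinuousAt φ 0 := by
    rw [ContinuousAt, hφ0]
    refine Filter.tendsto_def.2 fun U hU => ?_
    obtain ⟨γ, hγ⟩ := exists_ball_subset p d hd hU
    obtain ⟨M, hM⟩ := Filter.mem_atTop_sets.1 (hw (ball_mem_nhds p d γ))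
    set m : ℕ := (max M 0).toNat with hm
    have hMm : M ≤ (m : ℤ) := by omega
    have hW0 : tauZ p d (-(m : ℤ)) 0 = 0 := map_zero (tauHom p d (-(m : ℤ)))
    have hWnhds : tauZ p d (-(m : ℤ)) ⁻¹' (V : Set (Fin d → LaurentSeries (ZMod p))) ∈ nhds (0 : Fin d → LaurentSeries (ZMod p)) :=
      (hVo.preimage (tauZ_cont p d _)).mem_nhds (by
        rw [Set.mem_preimage, hW0]; exact V.zero_mem)
    refine Filter.mem_of_superset hWnhds fun x hx => ?_
    set z₀ : Fin d → LaurentSeries (ZMod p) := tauZ p d (-(m : ℤ)) x with hz₀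
    have hz₀V : z₀ ∈ V := hx
    have hxz : x = tauZ p d (m : ℤ) z₀ := by
      rw [hz₀, tauZ_comp, add_neg_cancel, tauZ_zero]
    have hφx : φ x ∈ ball p d γ := by
      refine hasSum_mem_of_closed p d (ball_isClosed p d γ) (fun jk => ?_) (hφsum x)
      rcases lt_or_ge jk.1 (m : ℤ) with h | h
      · have : N x jk = 0 := by
          rw [hxz]; exact hNshift m z₀ hz₀V jk h
        rw [this, zero_smul_X p d]
        exact (ball p d γ).zero_mem
      · have hidx : M ≤ ((jk.2 : ℕ) : ℤ) + 1 + jk.1 * (d : ℤ) := by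
          have h1 : jk.1 ≤ jk.1 * (d : ℤ) :=
            le_mul_of_one_le_right (by omega) (by exact_mod_cast hd)
          have h2 : (0 : ℤ) ≤ ((jk.2 : ℕ) : ℤ) := Int.natCast_nonneg _
          omega
        exact zmod_smul_mem p d (hM _ hidx) _
    exact Set.mem_preimage.2 (hγ hφx)
  exact continuous_of_continuousAt_zero φhom hcont0
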